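/- Let x, y, s, t be integers such that x^2 + s^2 - s^4 = -t^2 and y^2 + t^2 - t^4 = 1 - s^2. Then (x,y,s,t) = (0, ±1, 0, 0) or (0, 0, ±1, 0). -/
import Mathlib


theorem stmt_4 (x y s t : ℤ)
    (h1 : x^2 + s^2 - s^4 = -t^2) (h2 : y^2 + t^2 - t^4 = 1 - s^2) :
    (x = 0 ∧ (y = 1 ∨ y = -1) ∧ s = 0 ∧ t = 0) ∨
    (x = 0 ∧ y = 0 ∧ (s = 1 ∨ s = -1) ∧ t = 0) := by
  by_cases hs : s = 0
  · subst hs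
    have hx : x = 0 := by nlinarith [sq_nonneg x, sq_nonneg t]
    have ht : t = 0 := by nlinarith [sq_nonneg x, sq_nonneg t]
    subst hx; subst ht
    have hy : (y - 1) * (y + 1) = 0 := by nlinarith
    rcases mul_eq_zero.mp hy with h | h
    · exact Or.inl ⟨rfl, Or.inl (by omega), rfl, rfl⟩
    · exact Or.inl ⟨rfl, Or.inr (by omega), rfl, rfl⟩
  · have ha : 1 ≤ s ^ 2 := by rcases lt_or_gt_of_ne hs with h | h <;> nlinarith
    by_cases ht : t = 0
    · subst ht
      have hs1 : s ^ 2 = 1 := by nlinarith [sq_nonneg y]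
      have hy : y = 0 := by nlinarith
      have hx : x = 0 := by nlinarith
      have hss : (s - 1) * (s + 1) = 0 := by nlinarith
      rcases mul_eq_zero.mp hss with h | h
      · exact Or.inr ⟨hx, hy, Or.inl (by omega), rfl⟩
      · exact Or.inr ⟨hx, hy, Or.inr (by omega), rfl⟩
    · exfalso
      have hb : 1 ≤ t ^ 2 := by rcases lt_or_gt_of_ne ht with h | h <;> nlinarith
      have hx2 : x ^ 2 = s ^ 4 - s ^ 2 - t ^ 2 := by linarith
      have hy2 : y ^ 2 = t ^ 4 - t ^ 2 + 1 - s ^ 2 := by linarith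
      -- x^2 < (s^2)^2
      have hxlt : x ^ 2 < (s ^ 2) ^ 2 := by nlinarith
      have hxabs : |x| < s ^ 2 := abs_lt_of_sq_lt_sq hxlt (sq_nonneg s)
      have hxle : x ^ 2 ≤ (s ^ 2 - 1) ^ 2 := by
        have h1' : |x| ≤ s ^ 2 - 1 := by omega
        have h2' : (0:ℤ) ≤ |x| := abs_nonneg x
        nlinarith [sq_abs x]
      have hylt : y ^ 2 < (t ^ 2) ^ 2 := by nlinarith
      have hyabs : |y| < t ^ 2 := abs_lt_of_sq_lt_sq hylt (sq_nonneg t)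
      have hyle : y ^ 2 ≤ (t ^ 2 - 1) ^ 2 := by
        have h1' : |y| ≤ t ^ 2 - 1 := by omega
        have h2' : (0:ℤ) ≤ |y| := abs_nonneg y
        nlinarith [sq_abs y]
      have hba : t ^ 2 ≥ s ^ 2 - 1 := by nlinarith
      have hab : s ^ 2 ≥ t ^ 2 := by nlinarith
      have hcase : t ^ 2 = s ^ 2 ∨ t ^ 2 = s ^ 2 - 1 := by omega
      rcases hcase with hc | hc
      · have hprod : (s ^ 2 - 1 - x) * (s ^ 2 - 1 + x) = 1 := by nlinarith
        rcases Int.mul_eq_one_iff_eq_one_or_neg_one.mp hprod with ⟨h1', h2'⟩ | ⟨h1', h2'⟩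
        · have hs2 : s ^ 2 = 2 := by linarith
          have hb1 : 2 * s ≤ 3 := by linarith [sq_nonneg (s - 1)]
          have hb2 : -3 ≤ 2 * s := by linarith [sq_nonneg (s + 1)]
          have hle : s ≤ 1 := by omega
          have hge : -1 ≤ s := by omega
          interval_cases s <;> norm_num at hs2
        · have hs0 : s ^ 2 = 0 := by linarith
          exact hs (sq_eq_zero_iff.mp hs0)
      · have hprod : (t ^ 2 - 1 - y) * (t ^ 2 - 1 + y) = 1 := by nlinarith
        rcases Int.mul_eq_one_iff_eq_one_or_neg_one.mp hprod with ⟨h1', h2'⟩ | ⟨h1', h2'⟩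
        · have ht2 : t ^ 2 = 2 := by linarith
          have hb1 : 2 * t ≤ 3 := by linarith [sq_nonneg (t - 1)]
          have hb2 : -3 ≤ 2 * t := by linarith [sq_nonneg (t + 1)]
          have hle : t ≤ 1 := by omega
          have hge : -1 ≤ t := by omega
          interval_cases t <;> norm_num at ht2
        · have ht0 : t ^ 2 = 0 := by linarith
          exact ht (sq_eq_zero_iff.mp ht0)
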